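/- arXiv:2104.06974 — 2 statements merged into one kernel-verified Lean document; each statement's English description precedes it below -/
import Mathlib

section
/- Let s = b + c(p−1) and r = s + p^t(p−1)d with t ≥ 2, d ≥ 1, 2 ≤ b ≤ p, 0 ≤ c ≤ p−1, 0 ≤ m ≤ p−1, s ≥ m, and let l be an integer with 0 ≤ l ≤ m. Assume further 0 ≤ b−m ≤ c. Then: (1) ν_p( C(r−l, b−m) ) equals 0 if 0 ≤ l ≤ m−c, equals 1 if m−c+1 ≤ l ≤ b−c, and equals 0 if b−c+1 ≤ l ≤ b−c+p; and (2) the p-adic valuation of the rational number p^{2m−b} · C(r−l, b−m) / C(r−l, r−m) equals: 2m−b if m = b−c and 0 ≤ l ≤ m−c; 2m−b−1 if m ≥ b−c+1 and 0 ≤ l ≤ m−c; 2m−b+1 if m = b−c and m−c+1 ≤ l ≤ b−c; 2m−b if m ≥ b−c+1 and m−c+1 ≤ l ≤ b−c; 2m−b if m ≥ b−c+1 and b−c+1 ≤ l ≤ b−c+p. -/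
/-- Binomial coefficient of integers with the convention `iC n k = 0` when `k < 0` or `k > n`. -/
def iC (n k : ℤ) : ℤ := if 0 ≤ k ∧ k ≤ n then (n.toNat.choose k.toNat : ℤ) else 0



open Finset

lemma nval0 (p A K Q : ℕ) (hp : p.Prime) (hK : K ≤ A) (hA : A < p) :
    ¬ p ∣ (A + p * Q).choose K := by
  intro h
  have hd : p ∣ (A + p * Q).descFactorial K := by
    rw [Nat.descFactorial_eq_factorial_mul_choose]
    exact h.mul_left _
  rw [Nat.descFactorial_eq_prod_range] at hd
  obtain ⟨i, hi, hpi⟩ := (hp.prime.dvd_finset_prod_iff _).1 hd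
  rw [Finset.mem_range] at hi
  have hrw : A + p * Q - i = (A - i) + p * Q := by omega
  rw [hrw] at hpi
  have h2 : p ∣ A - i := by
    have := Nat.dvd_sub hpi (dvd_mul_right p Q)
    simpa using this
  have := Nat.le_of_dvd (by omega) h2
  omega

lemma nval1 (p A K Q : ℕ) (hp : p.Prime) (hA : A < K) (hK : K < p) (hQ1 : 1 ≤ Q)
    (hQd : ¬ p ∣ Q) : padicValNat p ((A + p * Q).choose K) = 1 := by
  haveI : Fact p.Prime := ⟨hp⟩
  have hpQ : p ≤ p * Q := Nat.le_mul_of_pos_right p hQ1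
  have hKn : K ≤ A + p * Q := by omega
  have hc0 : (A + p * Q).choose K ≠ 0 := (Nat.choose_pos hKn).ne'
  have hfact : padicValNat p (Nat.factorial K) = 0 :=
    padicValNat.eq_zero_of_not_dvd (fun h => by
      have := (Nat.Prime.dvd_factorial hp).mp h; omega)
  have hdesc : padicValNat p ((A + p * Q).descFactorial K) =
      padicValNat p (Nat.factorial K) + padicValNat p ((A + p * Q).choose K) := by
    rw [Nat.descFactorial_eq_factorial_mul_choose]
    exact padicValNat.mul (Nat.factorial_ne_zero K) hc0
  have key : padicValNat p ((A + p * Q).descFactorial K) = 1 := by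
    rw [Nat.descFactorial_eq_prod_range]
    have hmem : A ∈ Finset.range K := Finset.mem_range.mpr hA
    rw [← Finset.mul_prod_erase _ _ hmem]
    have hAe : A + p * Q - A = p * Q := by omega
    rw [hAe]
    have hrest : ∀ i ∈ (Finset.range K).erase A, ¬ p ∣ (A + p * Q - i) := by
      intro i hi hdvd
      have hiA : i ≠ A := (Finset.mem_erase.mp hi).1
      have hiK : i < K := Finset.mem_range.mp (Finset.mem_erase.mp hi).2
      rcases lt_or_gt_of_ne hiA with hlt | hgt
      · have hrw : A + p * Q - i = (A - i) + p * Q := by omega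
        rw [hrw] at hdvd
        have h2 : p ∣ A - i := by
          have := Nat.dvd_sub hdvd (dvd_mul_right p Q)
          simpa using this
        have := Nat.le_of_dvd (by omega) h2
        omega
      · have hrw : A + p * Q - i = p * Q - (i - A) := by omega
        rw [hrw] at hdvd
        have h2 : p ∣ i - A := by
          have := Nat.dvd_sub (dvd_mul_right p Q) hdvd
          have e : p * Q - (p * Q - (i - A)) = i - A := by omega
          rwa [e] at this
        have := Nat.le_of_dvd (by omega) h2
        omega
    have hrest0 : padicValNat p (∏ i ∈ (Finset.range K).erase A, (A + p * Q - i)) = 0 :=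
      padicValNat.eq_zero_of_not_dvd (by
        intro h
        obtain ⟨i, hi, hpi⟩ := (hp.prime.dvd_finset_prod_iff _).1 h
        exact hrest i hi hpi)
    have hprodne : (∏ i ∈ (Finset.range K).erase A, (A + p * Q - i)) ≠ 0 := by
      apply Finset.prod_ne_zero_iff.mpr
      intro i hi
      have hiK : i < K := Finset.mem_range.mp (Finset.mem_erase.mp hi).2
      omega
    rw [padicValNat.mul (Nat.mul_ne_zero hp.pos.ne' (by omega)) hprodne, hrest0,
      padicValNat.mul (hp.pos.ne') (by omega), padicValNat.self hp.one_lt,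
      padicValNat.eq_zero_of_not_dvd hQd]
  omega

lemma iC_eq (n k : ℤ) (hk0 : 0 ≤ k) (hkn : k ≤ n) : iC n k = (n.toNat.choose k.toNat : ℤ) :=
  if_pos ⟨hk0, hkn⟩

lemma iC_symm (n k : ℤ) (hk0 : 0 ≤ k) (hkn : k ≤ n) : iC n k = iC n (n - k) := by
  rw [iC_eq n k hk0 hkn, iC_eq n (n - k) (by omega) (by omega)]
  have h1 : (n - k).toNat = n.toNat - k.toNat := by omega
  rw [h1, Nat.choose_symm (by omega)]

lemma val0 (p : ℕ) (hp : p.Prime) (a k q : ℤ) (hk0 : 0 ≤ k) (hka : k ≤ a) (hap : a < (p:ℤ))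
    (hq : 0 ≤ q) :
    padicValInt p (iC (a + p * q) k) = 0 ∧ iC (a + p * q) k ≠ 0 := by
  have ha0 : 0 ≤ a := hk0.trans hka
  have hpq : 0 ≤ (p:ℤ) * q := mul_nonneg (by positivity) hq
  have e : a + (p:ℤ) * q = ((a.toNat + p * q.toNat : ℕ) : ℤ) := by
    push_cast
    rw [Int.toNat_of_nonneg ha0, Int.toNat_of_nonneg hq]
  rw [e, iC_eq _ _ hk0 (by rw [← e]; linarith), Int.toNat_natCast]
  have hKA : k.toNat ≤ a.toNat := by omega
  have hAp : a.toNat < p := by omega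
  have hKn : k.toNat ≤ a.toNat + p * q.toNat := hKA.trans (Nat.le_add_right _ _)
  refine ⟨?_, ?_⟩
  · rw [padicValInt.of_nat]
    exact padicValNat.eq_zero_of_not_dvd (nval0 p a.toNat k.toNat q.toNat hp hKA hAp)
  · exact_mod_cast (Nat.choose_pos hKn).ne'

lemma val1 (p : ℕ) (hp : p.Prime) (a k q : ℤ) (ha0 : 0 ≤ a) (hak : a < k) (hkp : k < (p:ℤ))
    (hq1 : 1 ≤ q) (hqd : ¬ (p:ℤ) ∣ q) :
    padicValInt p (iC (a + p * q) k) = 1 ∧ iC (a + p * q) k ≠ 0 := by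
  have hp2 : (2:ℤ) ≤ (p:ℤ) := by exact_mod_cast hp.two_le
  have hpq : (p:ℤ) ≤ (p:ℤ) * q := le_mul_of_one_le_right (by positivity) hq1
  have hk0 : 0 ≤ k := ha0.trans hak.le
  have e : a + (p:ℤ) * q = ((a.toNat + p * q.toNat : ℕ) : ℤ) := by
    push_cast
    rw [Int.toNat_of_nonneg ha0, Int.toNat_of_nonneg (by linarith)]
  have hkle : k ≤ a + (p:ℤ) * q := by linarith
  rw [e, iC_eq _ _ hk0 (by rw [← e]; exact hkle), Int.toNat_natCast]
  have hk2 : k ≤ ((a.toNat + p * q.toNat : ℕ) : ℤ) := by rw [← e]; exact hkle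
  have hk3 : k.toNat ≤ a.toNat + p * q.toNat := Int.toNat_le.mpr hk2
  have hQd : ¬ p ∣ q.toNat := by
    intro h
    apply hqd
    have hq' : ((q.toNat : ℕ) : ℤ) = q := Int.toNat_of_nonneg (by linarith)
    exact hq' ▸ Int.natCast_dvd_natCast.mpr h
  refine ⟨?_, ?_⟩
  · rw [padicValInt.of_nat]
    exact nval1 p a.toNat k.toNat q.toNat hp (by omega) (by omega) (by omega) hQd
  · exact_mod_cast (Nat.choose_pos hk3).ne'

lemma pzpow_val (p : ℕ) [hf : Fact p.Prime] (e : ℤ) : padicValRat p ((p:ℚ) ^ e) = e := by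
  have hp0 : (p:ℚ) ≠ 0 := by exact_mod_cast hf.out.pos.ne'
  rcases e with n | n
  · rw [Int.ofNat_eq_coe, zpow_natCast, padicValRat.pow (p:ℚ), padicValRat.self hf.out.one_lt]
    simp
  · rw [zpow_negSucc, padicValRat.inv, padicValRat.pow (p:ℚ), padicValRat.self hf.out.one_lt]
    simp [Int.negSucc_eq]

lemma ratval (p : ℕ) [hf : Fact p.Prime] (e : ℤ) (N D : ℤ) (hN : N ≠ 0) (hD : D ≠ 0) :
    padicValRat p ((p:ℚ) ^ e * (N:ℚ) / (D:ℚ)) = e + padicValInt p N - padicValInt p D := by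
  have hp0 : (p:ℚ) ≠ 0 := by exact_mod_cast hf.out.pos.ne'
  have hNQ : (N:ℚ) ≠ 0 := Int.cast_ne_zero.mpr hN
  have hDQ : (D:ℚ) ≠ 0 := Int.cast_ne_zero.mpr hD
  have hpe : (p:ℚ) ^ e ≠ 0 := zpow_ne_zero _ hp0
  rw [padicValRat.div (mul_ne_zero hpe hNQ) hDQ, padicValRat.mul hpe hNQ, pzpow_val,
    padicValRat.of_int, padicValRat.of_int]


/-- **Lemma 3.6 (A).** Let `p` be an odd prime, `s = b + c(p−1)`, `r = s + p^t(p−1)d` with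
`t ≥ 2`, `d ≥ 1`, `2 ≤ b ≤ p`, `0 ≤ c ≤ p−1`, `0 ≤ m ≤ p−1`, `s ≥ m`, `0 ≤ l ≤ m`, and
`0 ≤ b−m ≤ c`. Then `ν_p(C(r−l, b−m))` equals `0`, `1`, `0` on the listed ranges of `l`,
and the `p`-adic valuation of the rational number `p^{2m−b}·C(r−l, b−m)/C(r−l, r−m)` takes
the stated values in the five listed cases. -/
theorem stmt_13 (p : ℕ) (hp : p.Prime) (hodd : Odd p)
    (b c m l s r : ℤ) (t d : ℕ)
    (ht : 2 ≤ t) (hd : 1 ≤ d)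
    (hb2 : 2 ≤ b) (hbp : b ≤ (p : ℤ)) (hc0 : 0 ≤ c) (hcp : c ≤ (p : ℤ) - 1)
    (hm0 : 0 ≤ m) (hmp : m ≤ (p : ℤ) - 1)
    (hs : s = b + c * ((p : ℤ) - 1))
    (hr : r = s + (p : ℤ) ^ t * ((p : ℤ) - 1) * (d : ℤ))
    (hms : m ≤ s) (hl0 : 0 ≤ l) (hlm : l ≤ m)
    (hbm0 : 0 ≤ b - m) (hbmc : b - m ≤ c) :
    ((0 ≤ l ∧ l ≤ m - c) → padicValInt p (iC (r - l) (b - m)) = 0) ∧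
    ((m - c + 1 ≤ l ∧ l ≤ b - c) → padicValInt p (iC (r - l) (b - m)) = 1) ∧
    ((b - c + 1 ≤ l ∧ l ≤ b - c + p) → padicValInt p (iC (r - l) (b - m)) = 0) ∧
    ((m = b - c ∧ 0 ≤ l ∧ l ≤ m - c) →
      padicValRat p ((p : ℚ) ^ (2 * m - b) * (iC (r - l) (b - m) : ℚ) /
        (iC (r - l) (r - m) : ℚ)) = 2 * m - b) ∧
    ((b - c + 1 ≤ m ∧ 0 ≤ l ∧ l ≤ m - c) →
      padicValRat p ((p : ℚ) ^ (2 * m - b) * (iC (r - l) (b - m) : ℚ) /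
        (iC (r - l) (r - m) : ℚ)) = 2 * m - b - 1) ∧
    ((m = b - c ∧ m - c + 1 ≤ l ∧ l ≤ b - c) →
      padicValRat p ((p : ℚ) ^ (2 * m - b) * (iC (r - l) (b - m) : ℚ) /
        (iC (r - l) (r - m) : ℚ)) = 2 * m - b + 1) ∧
    ((b - c + 1 ≤ m ∧ m - c + 1 ≤ l ∧ l ≤ b - c) →
      padicValRat p ((p : ℚ) ^ (2 * m - b) * (iC (r - l) (b - m) : ℚ) /
        (iC (r - l) (r - m) : ℚ)) = 2 * m - b) ∧
    ((b - c + 1 ≤ m ∧ b - c + 1 ≤ l ∧ l ≤ b - c + p) →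
      padicValRat p ((p : ℚ) ^ (2 * m - b) * (iC (r - l) (b - m) : ℚ) /
        (iC (r - l) (r - m) : ℚ)) = 2 * m - b) := by
  haveI : Fact p.Prime := ⟨hp⟩
  obtain ⟨t', rfl⟩ : ∃ t', t = t' + 2 := ⟨t - 2, by omega⟩
  have hp2 : (2:ℤ) ≤ (p:ℤ) := by exact_mod_cast hp.two_le
  have hd1 : (1:ℤ) ≤ (d:ℤ) := by exact_mod_cast hd
  have hmb : m ≤ b := by linarith
  have hpow1 : (1:ℤ) ≤ (p:ℤ) ^ (t' + 1) := one_le_pow₀ (by linarith)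
  have hpow1' : (1:ℤ) ≤ (p:ℤ) ^ (t' + 2) := one_le_pow₀ (by linarith)
  have hA : (1:ℤ) ≤ (p:ℤ) ^ (t' + 1) * ((p:ℤ) - 1) := by nlinarith
  have hT1 : (1:ℤ) ≤ (p:ℤ) ^ (t' + 1) * ((p:ℤ) - 1) * (d:ℤ) := by nlinarith
  have hA' : (1:ℤ) ≤ (p:ℤ) ^ (t' + 2) * ((p:ℤ) - 1) := by nlinarith
  have hT1' : (1:ℤ) ≤ (p:ℤ) ^ (t' + 2) * ((p:ℤ) - 1) * (d:ℤ) := by nlinarith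
  have hrs : s ≤ r := by rw [hr]; linarith
  have hrl0 : 0 ≤ r - l := by linarith
  have hQ1nn : 0 ≤ c + (p:ℤ) ^ (t' + 1) * ((p:ℤ) - 1) * (d:ℤ) := by linarith
  have hQ11 : 1 ≤ c + (p:ℤ) ^ (t' + 1) * ((p:ℤ) - 1) * (d:ℤ) := by linarith
  have hdec1 : r - l = (b - c - l) + (p:ℤ) * (c + (p:ℤ) ^ (t' + 1) * ((p:ℤ) - 1) * (d:ℤ)) := by
    rw [hr, hs]; ring
  have hdec2 : r - l = (b - c - l + p) +
      (p:ℤ) * ((c - 1) + (p:ℤ) ^ (t' + 1) * ((p:ℤ) - 1) * (d:ℤ)) := by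
    rw [hr, hs]; ring
  have hndQ1 : 1 ≤ c → ¬ (p:ℤ) ∣ (c + (p:ℤ) ^ (t' + 1) * ((p:ℤ) - 1) * (d:ℤ)) := by
    intro hc1 h
    have hTd : (p:ℤ) ∣ (p:ℤ) ^ (t' + 1) * ((p:ℤ) - 1) * (d:ℤ) :=
      ⟨(p:ℤ) ^ t' * ((p:ℤ) - 1) * (d:ℤ), by ring⟩
    have h2 : (p:ℤ) ∣ c := by
      have := h.sub hTd
      simpa using this
    have := Int.le_of_dvd (by linarith) h2
    linarith
  have hden : iC (r - l) (r - m) = iC (r - l) (m - l) := by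
    rw [iC_symm (r - l) (r - m) (by linarith) (by linarith)]
    congr 1; ring
  have num0 : l ≤ m - c → padicValInt p (iC (r - l) (b - m)) = 0 ∧ iC (r - l) (b - m) ≠ 0 := by
    intro hcase
    by_cases hbm : b - m = 0
    · rw [hbm, iC_eq _ 0 le_rfl hrl0]
      norm_num [padicValInt]
    · have hc1 : 1 ≤ c := by omega
      rw [hdec1]
      exact val0 p hp _ _ _ hbm0 (by linarith) (by linarith) hQ1nn
  have num1 : m - c + 1 ≤ l → l ≤ b - c →
      padicValInt p (iC (r - l) (b - m)) = 1 ∧ iC (r - l) (b - m) ≠ 0 := by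
    intro h1 h2
    have hc1 : 1 ≤ c := by linarith
    rw [hdec1]
    exact val1 p hp _ _ _ (by linarith) (by linarith) (by linarith) hQ11 (hndQ1 hc1)
  have num0' : b - c + 1 ≤ l → l ≤ b - c + p →
      padicValInt p (iC (r - l) (b - m)) = 0 ∧ iC (r - l) (b - m) ≠ 0 := by
    intro h1 h2
    have hc1 : 1 ≤ c := by linarith
    rw [hdec2]
    exact val0 p hp _ _ _ hbm0 (by linarith) (by linarith) (by linarith)
  have denA0 : m = b - c → l ≤ b - c →
      padicValInt p (iC (r - l) (m - l)) = 0 ∧ iC (r - l) (m - l) ≠ 0 := by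
    intro h1 h2
    rw [hdec1]
    exact val0 p hp _ _ _ (by linarith) (by linarith) (by linarith) hQ1nn
  have denA1 : b - c + 1 ≤ m → l ≤ b - c →
      padicValInt p (iC (r - l) (m - l)) = 1 ∧ iC (r - l) (m - l) ≠ 0 := by
    intro h1 h2
    have hc1 : 1 ≤ c := by linarith
    rw [hdec1]
    exact val1 p hp _ _ _ (by linarith) (by linarith) (by linarith) hQ11 (hndQ1 hc1)
  have denB0 : b - c + 1 ≤ l → l ≤ b - c + p →
      padicValInt p (iC (r - l) (m - l)) = 0 ∧ iC (r - l) (m - l) ≠ 0 := by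
    intro h1 h2
    have hc1 : 1 ≤ c := by linarith
    rw [hdec2]
    exact val0 p hp _ _ _ (by linarith) (by linarith) (by linarith) (by linarith)
  refine ⟨fun h => (num0 h.2).1, fun h => (num1 h.1 h.2).1, fun h => (num0' h.1 h.2).1,
    ?_, ?_, ?_, ?_, ?_⟩
  · rintro ⟨h1, h2, h3⟩
    have hN := num0 h3
    have hD := denA0 h1 (by linarith)
    rw [hden, ratval p _ _ _ hN.2 hD.2, hN.1, hD.1]
    norm_num
  · rintro ⟨h1, h2, h3⟩
    have hN := num0 h3
    have hD := denA1 h1 (by linarith)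
    rw [hden, ratval p _ _ _ hN.2 hD.2, hN.1, hD.1]
    push_cast; ring
  · rintro ⟨h1, h2, h3⟩
    have hN := num1 h2 h3
    have hD := denA0 h1 h3
    rw [hden, ratval p _ _ _ hN.2 hD.2, hN.1, hD.1]
    push_cast; ring
  · rintro ⟨h1, h2, h3⟩
    have hN := num1 h2 h3
    have hD := denA1 h1 h3
    rw [hden, ratval p _ _ _ hN.2 hD.2, hN.1, hD.1]
    push_cast; ring
  · rintro ⟨h1, h2, h3⟩
    have hN := num0' h2 h3
    have hD := denB0 h2 h3
    rw [hden, ratval p _ _ _ hN.2 hD.2, hN.1, hD.1]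
    norm_num
end

section
/- Let a, b, c be nonnegative integers with c ≥ 1. Consider the c×c integer matrices M and M' with rows and columns indexed by 1 ≤ i, j ≤ c, whose (i,j) entries are C(a+b+i−1, a+i−j) and C(a+b, a+i−j) respectively. Then det(M) = det(M'), and det(M') · H(b+c) · H(c+a) · H(a+b) = H(a) · H(b) · H(c) · H(a+b+c), where H(n) = Π_{i=0}^{n−1} i!. In particular det(M) = det(M') = H(a)H(b)H(c)H(a+b+c) / ( H(b+c)H(c+a)H(a+b) ). -/
/-- `H n = Π_{i=0}^{n−1} i!` (so `H 0 = 1`). -/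
def Hfac (n : ℕ) : ℕ := ∏ i ∈ Finset.range n, i.factorial

lemma iC_neg {n k : ℤ} (h : k < 0) : iC n k = 0 := by
  simp [iC, not_le.mpr h]

lemma iC_nat (n : ℕ) (k : ℤ) : iC (n : ℤ) k = if 0 ≤ k then ((n.choose k.toNat : ℕ) : ℤ) else 0 := by
  unfold iC
  rcases le_or_gt 0 k with hk | hk
  · rcases le_or_gt k (n:ℤ) with hkn | hkn
    · simp [hk, hkn]
    · have : n < k.toNat := by omega
      simp [hk, not_le.mpr hkn, Nat.choose_eq_zero_of_lt this]
  · simp [not_le.mpr hk, hk.not_ge]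

lemma iC_nonneg (n : ℕ) {k : ℤ} (h0 : 0 ≤ k) :
    iC (n : ℤ) k = (n.choose k.toNat : ℤ) := by
  simp [iC_nat, h0]

lemma nat_vdm (n1 n2 M : ℕ) :
    ∑ t ∈ Finset.range (n1 + 1), (if t ≤ M then n1.choose t * n2.choose (M - t) else 0)
      = (n1 + n2).choose M := by
  rw [Nat.add_choose_eq, Finset.Nat.sum_antidiagonal_eq_sum_range_succ_mk]
  have h1 : ∑ t ∈ Finset.range (n1 + 1), (if t ≤ M then n1.choose t * n2.choose (M - t) else 0)
      = ∑ t ∈ Finset.range (n1 + M + 1), (if t ≤ M then n1.choose t * n2.choose (M - t) else 0) := by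
    apply Finset.sum_subset
    · intro x hx; simp only [Finset.mem_range] at *; omega
    · intro x hx hx'
      simp only [Finset.mem_range, not_lt] at hx hx'
      have : n1.choose x = 0 := Nat.choose_eq_zero_of_lt (by omega)
      simp [this]
  have h2 : ∑ t ∈ Finset.range (M + 1), (if t ≤ M then n1.choose t * n2.choose (M - t) else 0)
      = ∑ t ∈ Finset.range (n1 + M + 1), (if t ≤ M then n1.choose t * n2.choose (M - t) else 0) := by
    apply Finset.sum_subset
    · intro x hx; simp only [Finset.mem_range] at *; omega
    · intro x hx hx'
      simp only [Finset.mem_range, not_lt] at hx hx'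
      rw [if_neg (by omega)]
  have h3 : ∑ t ∈ Finset.range (M + 1), n1.choose t * n2.choose (M - t)
      = ∑ t ∈ Finset.range (M + 1), (if t ≤ M then n1.choose t * n2.choose (M - t) else 0) := by
    apply Finset.sum_congr rfl
    intro x hx
    simp only [Finset.mem_range] at hx
    rw [if_pos (by omega)]
  rw [h1, h3, h2]

-- Vandermonde convolution for iC
lemma iC_vandermonde (n1 n2 : ℕ) (m : ℤ) :
    ∑ t ∈ Finset.range (n1 + 1), (n1.choose t : ℤ) * iC (n2 : ℤ) (m - t) =
      iC ((n1 : ℤ) + n2) m := by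
  rcases lt_or_ge m 0 with hm | hm
  · rw [show ((n1:ℤ) + n2) = ((n1 + n2 : ℕ) : ℤ) by push_cast; ring, iC_neg hm]
    apply Finset.sum_eq_zero
    intro t ht
    rw [iC_neg (by omega : m - (t:ℤ) < 0), mul_zero]
  · obtain ⟨M, rfl⟩ := Int.eq_ofNat_of_zero_le hm
    rw [show ((n1:ℤ) + n2) = ((n1 + n2 : ℕ) : ℤ) by push_cast; ring,
      iC_nonneg _ (by positivity), Int.toNat_natCast, ← nat_vdm n1 n2 M]
    push_cast
    apply Finset.sum_congr rfl
    intro t ht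
    rcases le_or_gt t M with h | h
    · rw [iC_nonneg _ (by omega : (0:ℤ) ≤ (M:ℤ) - t), if_pos h]
      have : ((M:ℤ) - t).toNat = M - t := by omega
      rw [this]
    · rw [iC_neg (by omega : (M:ℤ) - t < 0), if_neg (by omega)]
      simp

lemma iC_diag (n : ℕ) : iC (n : ℤ) 0 = 1 := by simp [iC_nonneg]

lemma part1 (a b c : ℕ) :
    Matrix.det (Matrix.of fun i j : Fin c =>
        iC ((a : ℤ) + b + (i.val : ℤ)) ((a : ℤ) + (i.val : ℤ) - (j.val : ℤ)))
      = Matrix.det (Matrix.of fun i j : Fin c =>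
        iC ((a : ℤ) + b) ((a : ℤ) + (i.val : ℤ) - (j.val : ℤ))) := by
  set L : Matrix (Fin c) (Fin c) ℤ :=
    Matrix.of fun i k : Fin c => iC (i.val : ℤ) ((i.val : ℤ) - (k.val : ℤ)) with hL
  set M' : Matrix (Fin c) (Fin c) ℤ :=
    Matrix.of fun i j : Fin c => iC ((a : ℤ) + b) ((a : ℤ) + (i.val : ℤ) - (j.val : ℤ)) with hM'
  have hfact : (Matrix.of fun i j : Fin c =>
      iC ((a : ℤ) + b + (i.val : ℤ)) ((a : ℤ) + (i.val : ℤ) - (j.val : ℤ))) = L * M' := by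
    ext i j
    rw [Matrix.mul_apply]
    simp only [hL, hM', Matrix.of_apply]
    have hsum : ∑ k : Fin c, iC (i.val : ℤ) ((i.val : ℤ) - (k.val : ℤ)) *
        iC ((a : ℤ) + b) ((a : ℤ) + (k.val : ℤ) - (j.val : ℤ))
        = ∑ k ∈ Finset.range c, iC (i.val : ℤ) ((i.val : ℤ) - (k : ℤ)) *
        iC ((a : ℤ) + b) ((a : ℤ) + (k : ℤ) - (j.val : ℤ)) :=
      Fin.sum_univ_eq_sum_range
        (fun k => iC (i.val : ℤ) ((i.val : ℤ) - (k : ℤ)) *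
          iC ((a : ℤ) + b) ((a : ℤ) + (k : ℤ) - (j.val : ℤ))) c
    rw [hsum]
    have hshrink : ∑ k ∈ Finset.range c, iC (i.val : ℤ) ((i.val : ℤ) - (k : ℤ)) *
        iC ((a : ℤ) + b) ((a : ℤ) + (k : ℤ) - (j.val : ℤ))
        = ∑ k ∈ Finset.range (i.val + 1), iC (i.val : ℤ) ((i.val : ℤ) - (k : ℤ)) *
        iC ((a : ℤ) + b) ((a : ℤ) + (k : ℤ) - (j.val : ℤ)) := by
      symm
      apply Finset.sum_subset
      · intro x hx; simp only [Finset.mem_range] at *; omega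
      · intro x hx hx'
        simp only [Finset.mem_range, not_lt] at hx hx'
        rw [iC_neg (by omega : (i.val : ℤ) - (x : ℤ) < 0), zero_mul]
    rw [hshrink]
    have hrefl := Finset.sum_range_reflect (fun k => iC (i.val : ℤ) ((i.val : ℤ) - (k : ℤ)) *
        iC ((a : ℤ) + b) ((a : ℤ) + (k : ℤ) - (j.val : ℤ))) (i.val + 1)
    rw [← hrefl]
    have : ∀ t ∈ Finset.range (i.val + 1),
        iC (i.val : ℤ) ((i.val : ℤ) - ((i.val + 1 - 1 - t : ℕ) : ℤ)) *
        iC ((a : ℤ) + b) ((a : ℤ) + ((i.val + 1 - 1 - t : ℕ) : ℤ) - (j.val : ℤ))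
        = (i.val.choose t : ℤ) * iC ((a : ℤ) + b)
            (((a : ℤ) + (i.val : ℤ) - (j.val : ℤ)) - (t : ℤ)) := by
      intro t ht
      simp only [Finset.mem_range] at ht
      have h1 : ((i.val + 1 - 1 - t : ℕ) : ℤ) = (i.val : ℤ) - t := by omega
      rw [h1]
      have h2 : (i.val : ℤ) - ((i.val : ℤ) - t) = (t : ℤ) := by ring
      rw [h2, iC_nonneg _ (by positivity), Int.toNat_natCast]
      ring_nf
    rw [Finset.sum_congr rfl this]
    simp only [show (a:ℤ) + (b:ℤ) = ((a+b:ℕ):ℤ) from by push_cast; ring]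
    rw [iC_vandermonde i.val (a + b) ((a : ℤ) + (i.val : ℤ) - (j.val : ℤ))]
    congr 1
    push_cast
    ring
  rw [hfact, Matrix.det_mul]
  have hdetL : L.det = 1 := by
    have htri : L.BlockTriangular OrderDual.toDual := by
      intro i k h
      simp only [OrderDual.toDual_lt_toDual] at h
      simp only [hL, Matrix.of_apply]
      exact iC_neg (by
        have : i.val < k.val := h
        omega)
    rw [Matrix.det_of_lowerTriangular L htri]
    apply Finset.prod_eq_one
    intro i _
    simp only [hL, Matrix.of_apply, sub_self, iC_diag]
  rw [hdetL, one_mul]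

lemma prod_desc (N n : ℕ) (h : n ≤ N) :
    ∏ s ∈ Finset.range n, ((N : ℚ) - s) = (N.factorial : ℚ) / ((N - n).factorial : ℚ) := by
  have h1 : ∏ s ∈ Finset.range n, ((N : ℚ) - s) = ((N.descFactorial n : ℕ) : ℚ) := by
    rw [Nat.descFactorial_eq_prod_range, Nat.cast_prod]
    apply Finset.prod_congr rfl
    intro s hs
    simp only [Finset.mem_range] at hs
    have : s ≤ N := by omega
    push_cast [Nat.cast_sub this]
    ring
  rw [h1, eq_div_iff (by positivity), ← Nat.cast_mul, mul_comm,
    Nat.factorial_mul_descFactorial h]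

lemma prod_asc (K n : ℕ) :
    ∏ u ∈ Finset.range n, ((K : ℚ) + 1 + u) = ((K + n).factorial : ℚ) / (K.factorial : ℚ) := by
  have hK : (K.factorial : ℚ) ≠ 0 := by positivity
  induction n with
  | zero => simp [div_self hK]
  | succ n ih =>
    rw [Finset.prod_range_succ, ih, div_mul_eq_mul_div]
    congr 1
    rw [show K + (n+1) = (K+n) + 1 by ring, Nat.factorial_succ]
    push_cast
    ring

lemma iC_high {n k : ℤ} (h : n < k) : iC n k = 0 := by
  unfold iC
  rw [if_neg]
  rintro ⟨h1, h2⟩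
  omega

lemma detM' (a b c : ℕ) :
    Matrix.det (Matrix.of fun i j : Fin c =>
        ((iC ((a : ℤ) + b) ((a : ℤ) + (i.val : ℤ) - (j.val : ℤ))) : ℚ))
      * ((∏ j ∈ Finset.range c, ((a + j).factorial : ℚ))
          * ∏ j ∈ Finset.range c, ((b + j).factorial : ℚ))
      = (∏ j ∈ Finset.range c, (j.factorial : ℚ))
          * ∏ j ∈ Finset.range c, ((a + b + j).factorial : ℚ) := by
  classical
  set Mq : Matrix (Fin c) (Fin c) ℚ := Matrix.of fun i j : Fin c =>
    ((iC ((a : ℤ) + b) ((a : ℤ) + (i.val : ℤ) - (j.val : ℤ))) : ℚ) with hMq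
  set Q : Fin c → Polynomial ℚ := fun j =>
    (∏ s ∈ Finset.range j.val, (Polynomial.X + Polynomial.C ((a : ℚ) - 1 - s))) *
    (∏ u ∈ Finset.range (c - 1 - j.val),
      (Polynomial.C ((b : ℚ) + j.val + 2 + u) - Polynomial.X)) with hQ
  have heval : ∀ (j : Fin c) (x : ℚ), (Q j).eval x =
      (∏ s ∈ Finset.range j.val, (x + ((a : ℚ) - 1 - s))) *
      (∏ u ∈ Finset.range (c - 1 - j.val), ((b : ℚ) + j.val + 2 + u - x)) := by
    intro j x
    simp [hQ, Polynomial.eval_prod]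
  have hdeg : ∀ j : Fin c, (Q j).natDegree < c := by
    intro j
    simp only [hQ]
    have h1 : (∏ s ∈ Finset.range j.val,
        (Polynomial.X + Polynomial.C ((a : ℚ) - 1 - s))).natDegree ≤ j.val := by
      refine le_trans (Polynomial.natDegree_prod_le _ _) ?_
      have hb : ∀ s ∈ Finset.range j.val,
          (Polynomial.X + Polynomial.C ((a : ℚ) - 1 - s)).natDegree ≤ 1 :=
        fun s _ => le_of_eq (Polynomial.natDegree_X_add_C _)
      refine le_trans (Finset.sum_le_sum hb) (by simp)
    have h2 : (∏ u ∈ Finset.range (c - 1 - j.val),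
        (Polynomial.C ((b : ℚ) + j.val + 2 + u) - Polynomial.X)).natDegree ≤ c - 1 - j.val := by
      refine le_trans (Polynomial.natDegree_prod_le _ _) ?_
      have hb : ∀ u ∈ Finset.range (c - 1 - j.val),
          (Polynomial.C ((b : ℚ) + j.val + 2 + u) - Polynomial.X).natDegree ≤ 1 := by
        intro u _
        refine le_of_eq ?_
        rw [show Polynomial.C ((b : ℚ) + j.val + 2 + u) - Polynomial.X
            = -(Polynomial.X - Polynomial.C ((b : ℚ) + j.val + 2 + u)) by ring,
          Polynomial.natDegree_neg, Polynomial.natDegree_X_sub_C]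
      refine le_trans (Finset.sum_le_sum hb) (by simp)
    have hj := j.isLt
    have := le_trans (Polynomial.natDegree_mul_le (p := _) (q := _)) (add_le_add h1 h2)
    omega
  set CM : Matrix (Fin c) (Fin c) ℚ := Matrix.of fun k j : Fin c => (Q j).coeff k.val with hCM
  have hfact : ∀ v : Fin c → ℚ,
      (Matrix.of fun i j : Fin c => (Q j).eval (v i)) = Matrix.vandermonde v * CM := by
    intro v
    ext i j
    rw [Matrix.mul_apply, Matrix.of_apply,
      Polynomial.eval_eq_sum_range' (hdeg j) (v i),
      ← Fin.sum_univ_eq_sum_range (fun k => (Q j).coeff k * v i ^ k) c]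
    apply Finset.sum_congr rfl
    intro k _
    rw [Matrix.vandermonde_apply, hCM, Matrix.of_apply, mul_comm]
  have hdetE : ∀ v : Fin c → ℚ,
      Matrix.det (Matrix.of fun i j : Fin c => (Q j).eval (v i))
        = Matrix.det (Matrix.vandermonde v) * CM.det := by
    intro v
    rw [hfact, Matrix.det_mul]
  set v1 : Fin c → ℚ := fun i => (i.val : ℚ) + 1 with hv1
  set v2 : Fin c → ℚ := fun i => (b : ℚ) + i.val + 1 with hv2
  have hvdm : Matrix.det (Matrix.vandermonde v1) = Matrix.det (Matrix.vandermonde v2) := by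
    rw [Matrix.det_vandermonde, Matrix.det_vandermonde]
    refine Finset.prod_congr rfl (fun i _ => Finset.prod_congr rfl (fun j _ => ?_))
    simp only [hv1, hv2]
    ring
  -- E2 : triangularity at v2
  have hE2 : Matrix.det (Matrix.of fun i j : Fin c => (Q j).eval (v2 i))
      = ∏ j : Fin c, (Q j).eval (v2 j) := by
    have htri : (Matrix.of fun i j : Fin c => (Q j).eval (v2 i)).BlockTriangular id := by
      intro i j hij
      simp only [id_eq] at hij
      have hij' : j.val < i.val := hij
      simp only [Matrix.of_apply]
      rw [heval]
      apply mul_eq_zero_of_right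
      obtain ⟨d, hd⟩ : ∃ d, i.val = j.val + 1 + d := ⟨i.val - j.val - 1, by omega⟩
      apply Finset.prod_eq_zero (i := d) (by simp only [Finset.mem_range]; omega)
      simp only [hv2, hd]
      push_cast
      ring
    rw [Matrix.det_of_upperTriangular htri]
    exact Finset.prod_congr rfl (fun i _ => rfl)
  -- value on the diagonal
  have hdiag : ∀ j : Fin c, (Q j).eval (v2 j)
      = (((a + b + j.val).factorial : ℚ) / ((a + b).factorial : ℚ))
        * ((c - 1 - j.val).factorial : ℚ) := by
    intro j
    rw [heval]
    have e1 : ∏ s ∈ Finset.range j.val, (v2 j + ((a : ℚ) - 1 - s))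
        = ∏ s ∈ Finset.range j.val, (((a + b + j.val : ℕ) : ℚ) - s) := by
      refine Finset.prod_congr rfl (fun s _ => ?_)
      simp only [hv2]
      push_cast
      ring
    have e2 : ∏ u ∈ Finset.range (c - 1 - j.val), ((b : ℚ) + j.val + 2 + u - v2 j)
        = ∏ u ∈ Finset.range (c - 1 - j.val), ((u : ℚ) + 1) := by
      refine Finset.prod_congr rfl (fun u _ => ?_)
      simp only [hv2]
      ring
    rw [e1, e2, prod_desc _ _ (by omega), show a + b + j.val - j.val = a + b by omega]
    congr 1
    rw [← Finset.prod_range_add_one_eq_factorial, Nat.cast_prod]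
    apply Finset.prod_congr rfl
    intro u _
    push_cast
    ring
  set r : Fin c → ℚ := fun i =>
    ((a + i.val).factorial : ℚ) * ((b + c - 1 - i.val).factorial : ℚ)
      / ((a + b).factorial : ℚ) with hr
  have hE1 : (Matrix.of fun i j : Fin c => r i * Mq i j)
      = Matrix.of fun i j : Fin c => (Q j).eval (v1 i) := by
    ext i j
    simp only [Matrix.of_apply]
    rw [heval]
    rcases lt_or_ge ((a : ℤ) + i.val - j.val) 0 with hm | hm
    · rw [hMq]
      simp only [Matrix.of_apply]
      rw [iC_neg hm, Int.cast_zero, mul_zero]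
      symm
      apply mul_eq_zero_of_left
      apply Finset.prod_eq_zero (i := a + i.val) (by simp only [Finset.mem_range]; omega)
      simp only [hv1]
      push_cast
      ring
    · rcases lt_or_ge ((a : ℤ) + b) ((a : ℤ) + i.val - j.val) with hm2 | hm2
      · rw [hMq]
        simp only [Matrix.of_apply]
        rw [iC_high hm2, Int.cast_zero, mul_zero]
        symm
        apply mul_eq_zero_of_right
        obtain ⟨d, hd⟩ : ∃ d, i.val = b + j.val + 1 + d := ⟨i.val - b - j.val - 1, by omega⟩
        apply Finset.prod_eq_zero (i := d) (by simp only [Finset.mem_range]; omega)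
        simp only [hv1, hd]
        push_cast
        ring
      · have hj_le : j.val ≤ a + i.val := by omega
        have hi_le : i.val ≤ b + j.val := by omega
        set p := a + i.val - j.val with hp
        set q := b + j.val - i.val with hq
        have entry : Mq i j = (((a + b).choose p : ℕ) : ℚ) := by
          rw [hMq]
          simp only [Matrix.of_apply]
          rw [show (a : ℤ) + b = ((a + b : ℕ) : ℤ) by push_cast; ring, iC_nonneg _ hm]
          have htn : ((a : ℤ) + i.val - j.val).toNat = p := by omega
          rw [htn, Int.cast_natCast]
        have e1 : ∏ s ∈ Finset.range j.val, (v1 i + ((a : ℚ) - 1 - s))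
            = ((a + i.val).factorial : ℚ) / (p.factorial : ℚ) := by
          have h1 : ∏ s ∈ Finset.range j.val, (v1 i + ((a : ℚ) - 1 - s))
              = ∏ s ∈ Finset.range j.val, (((a + i.val : ℕ) : ℚ) - s) := by
            refine Finset.prod_congr rfl (fun s _ => ?_)
            simp only [hv1]
            push_cast
            ring
          rw [h1, prod_desc _ _ (by omega)]
        have e2 : ∏ u ∈ Finset.range (c - 1 - j.val), ((b : ℚ) + j.val + 2 + u - v1 i)
            = ((b + c - 1 - i.val).factorial : ℚ) / (q.factorial : ℚ) := by
          have hqc : ((q : ℕ) : ℚ) = (b : ℚ) + j.val - i.val := by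
            rw [hq]
            push_cast [Nat.cast_sub hi_le]
            ring
          have h2 : ∏ u ∈ Finset.range (c - 1 - j.val), ((b : ℚ) + j.val + 2 + u - v1 i)
              = ∏ u ∈ Finset.range (c - 1 - j.val), ((q : ℚ) + 1 + u) := by
            refine Finset.prod_congr rfl (fun u _ => ?_)
            rw [hqc]
            simp only [hv1]
            ring
          rw [h2, prod_asc, show q + (c - 1 - j.val) = b + c - 1 - i.val by omega]
        rw [e1, e2, entry, Nat.cast_choose ℚ (show p ≤ a + b by omega), hr,
          show a + b - p = q by omega]
        have n1 : (p.factorial : ℚ) ≠ 0 := Nat.cast_ne_zero.mpr (Nat.factorial_ne_zero _)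
        have n2 : (q.factorial : ℚ) ≠ 0 := Nat.cast_ne_zero.mpr (Nat.factorial_ne_zero _)
        have n3 : ((a + b).factorial : ℚ) ≠ 0 := Nat.cast_ne_zero.mpr (Nat.factorial_ne_zero _)
        field_simp
        try ring
  have hchain : (∏ i : Fin c, r i) * Mq.det = ∏ j : Fin c, (Q j).eval (v2 j) := by
    rw [← Matrix.det_mul_column r Mq, hE1, hdetE v1, hvdm, ← hdetE v2, hE2]
  have hprod_r : ∏ i : Fin c, r i
      = ((∏ i ∈ Finset.range c, ((a + i).factorial : ℚ))
          * ∏ i ∈ Finset.range c, ((b + i).factorial : ℚ))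
        / ((a + b).factorial : ℚ) ^ c := by
    rw [Fin.prod_univ_eq_prod_range (fun i => ((a + i).factorial : ℚ)
        * ((b + c - 1 - i).factorial : ℚ) / ((a + b).factorial : ℚ)) c]
    rw [Finset.prod_div_distrib, Finset.prod_mul_distrib, Finset.prod_const,
      Finset.card_range]
    have hrefl : ∏ i ∈ Finset.range c, ((b + c - 1 - i).factorial : ℚ)
        = ∏ i ∈ Finset.range c, ((b + i).factorial : ℚ) := by
      rw [← Finset.prod_range_reflect (fun i => ((b + i).factorial : ℚ)) c]
      refine Finset.prod_congr rfl (fun i hi => ?_)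
      simp only [Finset.mem_range] at hi
      congr 2
      omega
    rw [hrefl]
  have hprod_diag : ∏ j : Fin c, (Q j).eval (v2 j)
      = ((∏ j ∈ Finset.range c, ((a + b + j).factorial : ℚ))
          * ∏ j ∈ Finset.range c, (j.factorial : ℚ))
        / ((a + b).factorial : ℚ) ^ c := by
    rw [Finset.prod_congr rfl (fun j (_ : j ∈ Finset.univ) => hdiag j)]
    rw [Fin.prod_univ_eq_prod_range (fun j => (((a + b + j).factorial : ℚ)
        / ((a + b).factorial : ℚ)) * (((c - 1 - j).factorial : ℚ))) c]
    rw [Finset.prod_mul_distrib, Finset.prod_div_distrib, Finset.prod_const,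
      Finset.card_range, div_mul_eq_mul_div]
    congr 1
    rw [← Finset.prod_range_reflect (fun j => ((j).factorial : ℚ)) c]
  have hZ : ((a + b).factorial : ℚ) ^ c ≠ 0 := by
    exact pow_ne_zero _ (Nat.cast_ne_zero.mpr (Nat.factorial_ne_zero _))
  rw [hprod_r, hprod_diag, div_mul_eq_mul_div, div_eq_div_iff hZ hZ] at hchain
  have := mul_right_cancel₀ hZ hchain
  calc Mq.det * ((∏ j ∈ Finset.range c, ((a + j).factorial : ℚ))
          * ∏ j ∈ Finset.range c, ((b + j).factorial : ℚ))
      = ((∏ i ∈ Finset.range c, ((a + i).factorial : ℚ))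
          * ∏ i ∈ Finset.range c, ((b + i).factorial : ℚ)) * Mq.det := by ring
    _ = (∏ j ∈ Finset.range c, ((a + b + j).factorial : ℚ))
          * ∏ j ∈ Finset.range c, (j.factorial : ℚ) := this
    _ = (∏ j ∈ Finset.range c, (j.factorial : ℚ))
          * ∏ j ∈ Finset.range c, ((a + b + j).factorial : ℚ) := by ring

lemma Hfac_add (x y : ℕ) :
    Hfac (x + y) = Hfac x * ∏ j ∈ Finset.range y, (x + j).factorial := by
  rw [Hfac, Finset.prod_range_add]
  rfl


/-- **Lemma 3.9 (Grinberg, MacMahon).** For nonnegative integers `a, b, c` with `c ≥ 1`,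
the `c×c` matrices `M = (C(a+b+i−1, a+i−j))_{1≤i,j≤c}` and `M' = (C(a+b, a+i−j))_{1≤i,j≤c}`
have equal determinants, equal to `H(a)H(b)H(c)H(a+b+c) / (H(b+c)H(c+a)H(a+b))`. -/
theorem stmt_17 (a b c : ℕ) (hc : 1 ≤ c) :
    Matrix.det (Matrix.of fun i j : Fin c =>
        iC ((a : ℤ) + b + ((i.val : ℤ) + 1) - 1) ((a : ℤ) + ((i.val : ℤ) + 1) - ((j.val : ℤ) + 1)))
      = Matrix.det (Matrix.of fun i j : Fin c =>
        iC ((a : ℤ) + b) ((a : ℤ) + ((i.val : ℤ) + 1) - ((j.val : ℤ) + 1))) ∧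
    Matrix.det (Matrix.of fun i j : Fin c =>
        iC ((a : ℤ) + b) ((a : ℤ) + ((i.val : ℤ) + 1) - ((j.val : ℤ) + 1)))
      * (Hfac (b + c) : ℤ) * (Hfac (c + a) : ℤ) * (Hfac (a + b) : ℤ)
      = (Hfac a : ℤ) * (Hfac b : ℤ) * (Hfac c : ℤ) * (Hfac (a + b + c) : ℤ) ∧
    ((Matrix.det (Matrix.of fun i j : Fin c =>
        iC ((a : ℤ) + b) ((a : ℤ) + ((i.val : ℤ) + 1) - ((j.val : ℤ) + 1))) : ℚ)
      = (Hfac a : ℚ) * (Hfac b : ℚ) * (Hfac c : ℚ) * (Hfac (a + b + c) : ℚ)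
        / ((Hfac (b + c) : ℚ) * (Hfac (c + a) : ℚ) * (Hfac (a + b) : ℚ))) := by
  have hM1 : (Matrix.of fun i j : Fin c =>
      iC ((a : ℤ) + b + ((i.val : ℤ) + 1) - 1) ((a : ℤ) + ((i.val : ℤ) + 1) - ((j.val : ℤ) + 1)))
      = Matrix.of fun i j : Fin c =>
        iC ((a : ℤ) + b + (i.val : ℤ)) ((a : ℤ) + (i.val : ℤ) - (j.val : ℤ)) := by
    ext i j
    simp only [Matrix.of_apply]
    congr 1 <;> ring
  have hM2 : (Matrix.of fun i j : Fin c =>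
      iC ((a : ℤ) + b) ((a : ℤ) + ((i.val : ℤ) + 1) - ((j.val : ℤ) + 1)))
      = Matrix.of fun i j : Fin c =>
        iC ((a : ℤ) + b) ((a : ℤ) + (i.val : ℤ) - (j.val : ℤ)) := by
    ext i j
    simp only [Matrix.of_apply]
    congr 1
    ring
  set Mz : Matrix (Fin c) (Fin c) ℤ := Matrix.of fun i j : Fin c =>
    iC ((a : ℤ) + b) ((a : ℤ) + (i.val : ℤ) - (j.val : ℤ)) with hMz
  have hcast : ((Mz.det : ℤ) : ℚ) = Matrix.det (Matrix.of fun i j : Fin c =>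
      ((iC ((a : ℤ) + b) ((a : ℤ) + (i.val : ℤ) - (j.val : ℤ))) : ℚ)) := by
    rw [show ((Mz.det : ℤ) : ℚ) = (Int.castRingHom ℚ) Mz.det from rfl,
      RingHom.map_det]
    congr 1
  have key := detM' a b c
  rw [← hcast] at key
  -- the rational identity
  have hQ2 : ((Mz.det : ℤ) : ℚ) * (Hfac (b + c) : ℚ) * (Hfac (c + a) : ℚ) * (Hfac (a + b) : ℚ)
      = (Hfac a : ℚ) * (Hfac b : ℚ) * (Hfac c : ℚ) * (Hfac (a + b + c) : ℚ) := by
    have h1 : (Hfac (b + c) : ℚ)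
        = (Hfac b : ℚ) * ∏ j ∈ Finset.range c, ((b + j).factorial : ℚ) := by
      rw [Hfac_add]
      push_cast
      ring
    have h2 : (Hfac (c + a) : ℚ)
        = (Hfac a : ℚ) * ∏ j ∈ Finset.range c, ((a + j).factorial : ℚ) := by
      rw [show c + a = a + c by ring, Hfac_add]
      push_cast
      ring
    have h3 : (Hfac (a + b + c) : ℚ)
        = (Hfac (a + b) : ℚ) * ∏ j ∈ Finset.range c, ((a + b + j).factorial : ℚ) := by
      rw [Hfac_add]
      push_cast
      ring
    have h4 : (Hfac c : ℚ) = ∏ j ∈ Finset.range c, (j.factorial : ℚ) := by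
      rw [Hfac]
      push_cast
      ring
    rw [h1, h2, h3, h4]
    linear_combination ((Hfac a : ℚ) * (Hfac b : ℚ) * (Hfac (a + b) : ℚ)) * key
  refine ⟨?_, ?_, ?_⟩
  · rw [hM1, hM2]
    exact part1 a b c
  · rw [hM2]
    exact_mod_cast hQ2
  · have hM2q : (Matrix.of fun i j : Fin c =>
        ((iC ((a : ℤ) + b) ((a : ℤ) + ((i.val : ℤ) + 1) - ((j.val : ℤ) + 1))) : ℚ))
        = Matrix.of fun i j : Fin c =>
          ((iC ((a : ℤ) + b) ((a : ℤ) + (i.val : ℤ) - (j.val : ℤ))) : ℚ) := by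
      ext i j
      simp only [Matrix.of_apply]
      congr 2
      ring
    rw [hM2q, ← hcast]
    have hden : ((Hfac (b + c) : ℚ) * (Hfac (c + a) : ℚ) * (Hfac (a + b) : ℚ)) ≠ 0 := by
      have : ∀ n : ℕ, (Hfac n : ℚ) ≠ 0 := by
        intro n
        rw [Hfac]
        push_cast
        apply Finset.prod_ne_zero_iff.mpr
        intro i _
        exact Nat.cast_ne_zero.mpr (Nat.factorial_ne_zero _)
      exact mul_ne_zero (mul_ne_zero (this _) (this _)) (this _)
    rw [eq_div_iff hden]
    linear_combination hQ2
end
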